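/- Let s>0, t>0, set D = B_{s,t}, and suppose a = (a₁,a₂) ∈ D and f_k = (u_k,v_k): Δ → D is a sequence of harmonic maps with f_k(0) → a and ‖df_k(0)‖ → ∞ as k → ∞. Then for every c ∈ ℝ: (i) there exists K ∈ ℕ such that c ∈ u_k(Δ) for all k ≥ K; and (ii) for every ε>0 there exists K ∈ ℕ such that for all k ≥ K there is a point z ∈ Δ with |z| < ε and u_k(z) = c. -/

import Mathlib

open Complex Metric Set Filter Topology

/-- The base domain `B_{s,t}`: `x₂ > x₁·log(t·x₁)` for `x₁ > 0`, `x₂ > 0` for `x₁ = 0`,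
and `x₂ > x₁·log(s·(-x₁))` for `x₁ < 0`. -/
def setB (s t : ℝ) : Set (ℝ × ℝ) :=
  {x | (0 < x.1 → x.1 * Real.log (t * x.1) < x.2) ∧ (x.1 = 0 → 0 < x.2) ∧
       (x.1 < 0 → x.1 * Real.log (s * (-x.1)) < x.2)}

/-- The Laplacian of `u : ℂ → ℝ`, as the sum of the second directional derivatives
in the directions `1` and `I`. -/
noncomputable def laplacian (u : ℂ → ℝ) (z : ℂ) : ℝ :=
  fderiv ℝ (fun w => fderiv ℝ u w 1) z 1 +
    fderiv ℝ (fun w => fderiv ℝ u w Complex.I) z Complex.I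

/-- A real-valued function is harmonic on a set if it is `C²` there and its
Laplacian vanishes there. -/
def HarmonicOn (u : ℂ → ℝ) (s : Set ℂ) : Prop :=
  ContDiffOn ℝ 2 u s ∧ ∀ z ∈ s, laplacian u z = 0

/-- A map `f = (u, v) : ℂ → ℝ²` is a harmonic map on a set if both components
are harmonic there. -/
def HarmonicMapOn (f : ℂ → ℝ × ℝ) (s : Set ℂ) : Prop :=
  HarmonicOn (fun z => (f z).1) s ∧ HarmonicOn (fun z => (f z).2) s


open intervalIntegral in
noncomputable def hgrad (u : ℂ → ℝ) (w : ℂ) : ℂ :=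
  (fderiv ℝ u w 1 : ℝ) - (fderiv ℝ u w Complex.I : ℝ) * Complex.I

lemma hgrad_hasDerivAt {u : ℂ → ℝ} {c : ℂ} {R : ℝ} (hu : HarmonicOn u (ball c R))
    {z₀ : ℂ} (hz : z₀ ∈ ball c R) : ∃ d, HasDerivAt (hgrad u) d z₀ := by
  obtain ⟨hC2, hlap⟩ := hu
  have hopen : IsOpen (ball c R) := isOpen_ball
  have hφ : ContDiffOn ℝ 1 (fun y => fderiv ℝ u y) (ball c R) :=
    hC2.fderiv_of_isOpen hopen (by norm_num)
  have hφd : DifferentiableAt ℝ (fun y => fderiv ℝ u y) z₀ :=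
    ((hφ.differentiableOn one_ne_zero) z₀ hz).differentiableAt (hopen.mem_nhds hz)
  set Φ := fderiv ℝ (fun y => fderiv ℝ u y) z₀ with hΦdef
  have hΦ : HasFDerivAt (fun y => fderiv ℝ u y) Φ z₀ := hφd.hasFDerivAt
  have hsymm : ∀ v w : ℂ, Φ v w = Φ w v := by
    intro v w
    refine second_derivative_symmetric_of_eventually (f := u) ?_ hΦ v w
    filter_upwards [hopen.mem_nhds hz] with y hy
    exact (((hC2.differentiableOn (by norm_num)) y hy).differentiableAt
      (hopen.mem_nhds hy)).hasFDerivAt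
  have hap1 : fderiv ℝ (fun w => fderiv ℝ u w 1) z₀
      = (ContinuousLinearMap.apply ℝ ℝ (1:ℂ)).comp Φ :=
    (((ContinuousLinearMap.apply ℝ ℝ (1:ℂ)).hasFDerivAt).comp z₀ hΦ).fderiv
  have hap2 : fderiv ℝ (fun w => fderiv ℝ u w Complex.I) z₀
      = (ContinuousLinearMap.apply ℝ ℝ (Complex.I)).comp Φ :=
    (((ContinuousLinearMap.apply ℝ ℝ (Complex.I)).hasFDerivAt).comp z₀ hΦ).fderiv
  have hlap0 : Φ 1 1 + Φ Complex.I Complex.I = 0 := by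
    have h0 := hlap z₀ hz
    unfold laplacian at h0
    rw [hap1, hap2] at h0
    simpa using h0
  have h1 : HasFDerivAt (fun y => ((fderiv ℝ u y 1 : ℝ) : ℂ))
      (Complex.ofRealCLM.comp ((ContinuousLinearMap.apply ℝ ℝ (1:ℂ)).comp Φ)) z₀ :=
    Complex.ofRealCLM.hasFDerivAt.comp z₀
      (((ContinuousLinearMap.apply ℝ ℝ (1:ℂ)).hasFDerivAt).comp z₀ hΦ)
  have h2 : HasFDerivAt (fun y => ((fderiv ℝ u y Complex.I : ℝ) : ℂ) * Complex.I)
      (Complex.I • (Complex.ofRealCLM.comp ((ContinuousLinearMap.apply ℝ ℝ (Complex.I)).comp Φ)))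
      z₀ :=
    (Complex.ofRealCLM.hasFDerivAt.comp z₀
      (((ContinuousLinearMap.apply ℝ ℝ (Complex.I)).hasFDerivAt).comp z₀ hΦ)).mul_const Complex.I
  set L := (Complex.ofRealCLM.comp ((ContinuousLinearMap.apply ℝ ℝ (1:ℂ)).comp Φ))
    - (Complex.I • (Complex.ofRealCLM.comp ((ContinuousLinearMap.apply ℝ ℝ (Complex.I)).comp Φ)))
    with hLdef
  have hL : HasFDerivAt (hgrad u) L z₀ := h1.sub h2
  set d : ℂ := ((Φ 1 1 : ℝ) : ℂ) - ((Φ 1 Complex.I : ℝ) : ℂ) * Complex.I with hddef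
  have hEq : (ContinuousLinearMap.smulRight (1 : ℂ →L[ℂ] ℂ) d).restrictScalars ℝ = L := by
    refine ContinuousLinearMap.ext fun w => ?_
    have hw : w = w.re • (1:ℂ) + w.im • Complex.I := by
      simp [Complex.real_smul, Complex.re_add_im]
    have eΦ : Φ w = w.re • Φ 1 + w.im • Φ Complex.I := by
      conv_lhs => rw [hw]
      rw [map_add, map_smul, map_smul]
    have e1 : Φ w 1 = w.re * Φ 1 1 + w.im * Φ Complex.I 1 := by rw [eΦ]; simp
    have e2 : Φ w Complex.I = w.re * Φ 1 Complex.I + w.im * Φ Complex.I Complex.I := by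
      rw [eΦ]; simp
    have hII : Φ Complex.I Complex.I = -(Φ 1 1) := by linarith [hlap0]
    have hI1 : Φ Complex.I 1 = Φ 1 Complex.I := hsymm _ _
    simp only [ContinuousLinearMap.coe_restrictScalars', ContinuousLinearMap.smulRight_apply,
      ContinuousLinearMap.one_apply, hLdef, ContinuousLinearMap.coe_sub',
      Pi.sub_apply, ContinuousLinearMap.coe_comp', Function.comp_apply,
      ContinuousLinearMap.coe_smul', Pi.smul_apply, ContinuousLinearMap.apply_apply,
      Complex.ofRealCLM_apply, smul_eq_mul]
    rw [e1, e2, hI1, hII, hddef]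
    apply Complex.ext <;> simp [Complex.mul_re, Complex.mul_im] <;> ring
  have hL' : HasFDerivAt (hgrad u) (ContinuousLinearMap.smulRight (1 : ℂ →L[ℂ] ℂ) d) z₀ := by
    rw [hasFDerivAt_iff_isLittleO_nhds_zero] at hL ⊢
    rw [← hEq] at hL
    exact hL
  exact ⟨d, by simpa using hL'.hasDerivAt⟩

lemma exists_primitive {h : ℂ → ℂ} {c : ℂ} {R : ℝ} (hR : 0 < R)
    (hd : DifferentiableOn ℂ h (ball c R)) {z₁ : ℂ} (hz₁ : z₁ ∈ ball c R) :
    HasDerivAt (fun z => ∫ t in (0:ℝ)..1, h (c + (t:ℂ) * (z - c)) * (z - c)) (h z₁) z₁ := by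
  have hopen : IsOpen (ball c R) := isOpen_ball
  have han : AnalyticOnNhd ℂ h (ball c R) := hd.analyticOnNhd hopen
  have hcont : ContinuousOn h (ball c R) := hd.continuousOn
  have hdercont : ContinuousOn (deriv h) (ball c R) :=
    ((han.deriv_of_isOpen hopen).differentiableOn).continuousOn
  set d₁ : ℝ := dist z₁ c with hd₁
  have hd₁R : d₁ < R := mem_ball.1 hz₁
  have hd₁0 : 0 ≤ d₁ := dist_nonneg
  set ε : ℝ := (R - d₁) / 2 with hε
  have hεpos : 0 < ε := by rw [hε]; linarith
  set r' : ℝ := (R + d₁) / 2 with hr'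
  have hr'R : r' < R := by rw [hr']; linarith
  have hr'0 : 0 ≤ r' := by positivity
  have hKsub : closedBall c r' ⊆ ball c R := closedBall_subset_ball hr'R
  set γ : ℂ → ℝ → ℂ := fun z t => c + (t:ℂ) * (z - c) with hγ
  have hγmem : ∀ z ∈ closedBall z₁ ε, ∀ t ∈ Set.Icc (0:ℝ) 1, γ z t ∈ closedBall c r' := by
    intro z hz t ht
    simp only [hγ, mem_closedBall, dist_eq_norm, add_sub_cancel_left]
    rw [norm_mul]
    have h1 : ‖(t:ℂ)‖ ≤ 1 := by
      rw [Complex.norm_real, Real.norm_eq_abs, _root_.abs_of_nonneg ht.1]; exact ht.2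
    have h2 : ‖z - c‖ ≤ r' := by
      have h3 := dist_triangle z z₁ c
      rw [mem_closedBall] at hz
      simp only [dist_eq_norm] at h3 hz ⊢
      calc ‖z - c‖ ≤ ‖z - z₁‖ + ‖z₁ - c‖ := h3
        _ ≤ ε + d₁ := by rw [hd₁]; exact add_le_add hz (dist_eq_norm z₁ c).ge
        _ = r' := by rw [hε, hr']; ring
    calc ‖(t:ℂ)‖ * ‖z - c‖ ≤ 1 * r' := mul_le_mul h1 h2 (norm_nonneg _) one_pos.le
      _ = r' := one_mul r'
  have hγcont : ∀ z : ℂ, ContinuousOn (fun t : ℝ => γ z t) (Set.Icc 0 1) :=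
    fun z => (continuous_const.add ((Complex.continuous_ofReal.mul continuous_const))).continuousOn
  obtain ⟨C₁, hC₁⟩ := (isCompact_closedBall c r').exists_bound_of_continuousOn
    (hcont.mono hKsub)
  obtain ⟨C₂, hC₂⟩ := (isCompact_closedBall c r').exists_bound_of_continuousOn
    (hdercont.mono hKsub)
  have hC₁0 : 0 ≤ C₁ := le_trans (norm_nonneg _) (hC₁ c (mem_closedBall_self hr'0))
  have hC₂0 : 0 ≤ C₂ := le_trans (norm_nonneg _) (hC₂ c (mem_closedBall_self hr'0))
  set coef : ℂ → ℝ → ℂ := fun z t => h (γ z t) + (t:ℂ) * (z - c) * deriv h (γ z t) with hcoef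
  set Cb : ℝ := C₁ + r' * C₂ with hCb
  have hcoefcont : ∀ z ∈ closedBall z₁ ε, ContinuousOn (fun t => coef z t) (Set.Icc 0 1) := by
    intro z hz
    have hmapsTo : Set.MapsTo (fun t : ℝ => γ z t) (Set.Icc 0 1) (ball c R) :=
      fun t ht => hKsub (hγmem z hz t ht)
    exact ((hcont.comp (hγcont z) hmapsTo).add
      (((Complex.continuous_ofReal.continuousOn.mul continuousOn_const)).mul
        (hdercont.comp (hγcont z) hmapsTo)))
  have hFcont : ∀ z ∈ closedBall z₁ ε, ContinuousOn (fun t : ℝ => h (γ z t) * (z - c))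
      (Set.Icc 0 1) := by
    intro z hz
    have hmapsTo : Set.MapsTo (fun t : ℝ => γ z t) (Set.Icc 0 1) (ball c R) :=
      fun t ht => hKsub (hγmem z hz t ht)
    exact (hcont.comp (hγcont z) hmapsTo).mul continuousOn_const
  have huIoc : Set.uIoc (0:ℝ) 1 ⊆ Set.Icc 0 1 := by
    rw [Set.uIoc_of_le zero_le_one]
    exact fun x hx => ⟨hx.1.le, hx.2⟩
  have huIcc : Set.uIcc (0:ℝ) 1 = Set.Icc 0 1 := Set.uIcc_of_le zero_le_one
  have hdiff : ∀ t ∈ Set.Icc (0:ℝ) 1, ∀ z ∈ ball z₁ ε,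
      HasDerivAt (fun z' => h (γ z' t) * (z' - c)) (coef z t) z := by
    intro t ht z hz
    have hγz : HasDerivAt (fun z' : ℂ => γ z' t) (t:ℂ) z := by
      have h5 : HasDerivAt (fun z' : ℂ => z' - c) 1 z := (hasDerivAt_id z).sub_const c
      simpa [hγ] using (h5.const_mul (t:ℂ)).const_add c
    have hmem : γ z t ∈ ball c R := hKsub (hγmem z (ball_subset_closedBall hz) t ht)
    have hh : HasDerivAt h (deriv h (γ z t)) (γ z t) :=
      ((hd (γ z t) hmem).differentiableAt (hopen.mem_nhds hmem)).hasDerivAt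
    have hcomp : HasDerivAt (fun z' => h (γ z' t)) (deriv h (γ z t) * (t:ℂ)) z := hh.comp z hγz
    have h6 := hcomp.mul ((hasDerivAt_id z).sub_const c)
    exact h6.congr_deriv (by
    simp only [hcoef, mul_one, id_eq]
    ring)
  -- differentiation under the integral sign
  have key := (intervalIntegral.hasDerivAt_integral_of_dominated_loc_of_deriv_le
    (μ := MeasureTheory.volume) (a := (0:ℝ)) (b := (1:ℝ)) (𝕜 := ℂ)
    (F := fun z t => h (γ z t) * (z - c)) (F' := coef) (x₀ := z₁)
    (bound := fun _ => Cb) (ball_mem_nhds z₁ hεpos)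
    (by
      filter_upwards [closedBall_mem_nhds z₁ hεpos] with z hz
      exact ((hFcont z hz).mono huIoc).aestronglyMeasurable measurableSet_uIoc)
    (((hFcont z₁ (mem_closedBall_self hεpos.le)).mono (by rw [huIcc])).intervalIntegrable)
    (((hcoefcont z₁ (mem_closedBall_self hεpos.le)).mono huIoc).aestronglyMeasurable
      measurableSet_uIoc)
    (by
      apply Filter.Eventually.of_forall
      intro t ht z hz
      have ht' : t ∈ Set.Icc (0:ℝ) 1 := huIoc ht
      have hγK : γ z t ∈ closedBall c r' := hγmem z (ball_subset_closedBall hz) t ht'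
      have h1 : ‖h (γ z t)‖ ≤ C₁ := hC₁ _ hγK
      have h2 : ‖(t:ℂ) * (z - c) * deriv h (γ z t)‖ ≤ r' * C₂ := by
        rw [norm_mul, norm_mul]
        have ht1 : ‖(t:ℂ)‖ ≤ 1 := by
          rw [Complex.norm_real, Real.norm_eq_abs, _root_.abs_of_nonneg ht'.1]; exact ht'.2
        have hz1 : ‖z - c‖ ≤ r' := by
          have h3 := hγmem z (ball_subset_closedBall hz) 1 (by norm_num)
          simpa [hγ, dist_eq_norm] using h3
        calc ‖(t:ℂ)‖ * ‖z - c‖ * ‖deriv h (γ z t)‖ ≤ 1 * r' * C₂ := by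
              apply mul_le_mul (mul_le_mul ht1 hz1 (norm_nonneg _) one_pos.le) (hC₂ _ hγK)
                (norm_nonneg _) (by positivity)
          _ = r' * C₂ := by ring
      calc ‖coef z t‖ ≤ ‖h (γ z t)‖ + ‖(t:ℂ) * (z - c) * deriv h (γ z t)‖ := norm_add_le _ _
        _ ≤ Cb := by rw [hCb]; exact add_le_add h1 h2)
    intervalIntegrable_const
    (by
      apply Filter.Eventually.of_forall
      intro t ht z hz
      exact hdiff t (huIoc ht) z hz)).2
  -- compute the integral of coef via FTC
  have hcoefInt : IntervalIntegrable (fun t => coef z₁ t) MeasureTheory.volume 0 1 :=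
    ((hcoefcont z₁ (mem_closedBall_self hεpos.le)).mono (by rw [huIcc])).intervalIntegrable
  have hFTC : (∫ t in (0:ℝ)..1, coef z₁ t) = h z₁ := by
    have hq : ∀ t ∈ Set.uIcc (0:ℝ) 1,
        HasDerivAt (fun t : ℝ => (t:ℂ) * h (γ z₁ t)) (coef z₁ t) t := by
      intro t ht
      rw [huIcc] at ht
      have hmem : γ z₁ t ∈ ball c R := hKsub (hγmem z₁ (mem_closedBall_self hεpos.le) t ht)
      -- complex auxiliary function
      have hQ : HasDerivAt (fun w : ℂ => w * h (c + w * (z₁ - c)))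
          (h (γ z₁ t) + (t:ℂ) * (deriv h (γ z₁ t) * (z₁ - c))) (t:ℂ) := by
        have hin : HasDerivAt (fun w : ℂ => c + w * (z₁ - c)) (z₁ - c) (t:ℂ) := by
          simpa using ((hasDerivAt_id ((t:ℂ))).mul_const (z₁ - c)).const_add c
        have hh : HasDerivAt h (deriv h (γ z₁ t)) (γ z₁ t) :=
          ((hd (γ z₁ t) hmem).differentiableAt (hopen.mem_nhds hmem)).hasDerivAt
        have hcomp : HasDerivAt (fun w : ℂ => h (c + w * (z₁ - c)))
            (deriv h (γ z₁ t) * (z₁ - c)) (t:ℂ) := by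
          have := hh.comp (t:ℂ) hin
          exact this
        have := (hasDerivAt_id ((t:ℂ))).mul hcomp
        exact this.congr_deriv (by
        simp [hγ])
      have := hQ.comp_ofReal
      convert this using 1
      simp only [hcoef]
      ring
    have hint := intervalIntegral.integral_eq_sub_of_hasDerivAt hq hcoefInt
    rw [hint]
    simp [hγ]
  rw [hFTC] at key
  exact key

lemma clm_apply_eq_re_mul (L : ℂ →L[ℝ] ℝ) (w : ℂ) :
    L w = ((((L 1 : ℝ) : ℂ) - ((L Complex.I : ℝ)) * Complex.I) * w).re := by
  have hw : w = w.re • (1:ℂ) + w.im • Complex.I := by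
    simp [Complex.real_smul, Complex.re_add_im]
  conv_lhs => rw [hw]
  rw [map_add, map_smul, map_smul]
  simp [Complex.mul_re]
  ring

lemma norm_fderiv_le_abs_hgrad (u : ℂ → ℝ) (z : ℂ) :
    ‖fderiv ℝ u z‖ ≤ ‖hgrad u z‖ := by
  apply ContinuousLinearMap.opNorm_le_bound _ (norm_nonneg _)
  intro w
  rw [show (fderiv ℝ u z) w
    = ((((fderiv ℝ u z 1 : ℝ) : ℂ) - ((fderiv ℝ u z Complex.I : ℝ)) * Complex.I) * w).re
    from clm_apply_eq_re_mul _ w]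
  calc ‖(((((fderiv ℝ u z 1 : ℝ) : ℂ) - ((fderiv ℝ u z Complex.I : ℝ)) * Complex.I)) * w).re‖
      ≤ ‖(((fderiv ℝ u z 1 : ℝ) : ℂ) - ((fderiv ℝ u z Complex.I : ℝ)) * Complex.I) * w‖ := by
        rw [Real.norm_eq_abs]; exact Complex.abs_re_le_norm _
    _ = ‖hgrad u z‖ * ‖w‖ := by rw [norm_mul]; rfl

lemma exists_completion {u : ℂ → ℝ} {c : ℂ} {R : ℝ} (hR : 0 < R)
    (hu : HarmonicOn u (ball c R)) :
    ∃ F : ℂ → ℂ, (∀ z ∈ ball c R, HasDerivAt F (hgrad u z) z) ∧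
      ∀ z ∈ ball c R, (F z).re = u z := by
  have hopen : IsOpen (ball c R) := isOpen_ball
  have hgd : DifferentiableOn ℂ (hgrad u) (ball c R) := by
    intro z hz
    obtain ⟨d, hd⟩ := hgrad_hasDerivAt hu hz
    exact hd.differentiableAt.differentiableWithinAt
  have hgcont : ContinuousOn (hgrad u) (ball c R) := hgd.continuousOn
  refine ⟨fun z => (u c : ℂ) + ∫ t in (0:ℝ)..1, hgrad u (c + (t:ℂ) * (z - c)) * (z - c), ?_, ?_⟩
  · intro z hz
    exact (exists_primitive hR hgd hz).const_add _
  · intro z hz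
    have hγmem : ∀ t ∈ Set.Icc (0:ℝ) 1, c + (t:ℂ) * (z - c) ∈ ball c R := by
      intro t ht
      simp only [mem_ball, dist_eq_norm, add_sub_cancel_left]
      rw [norm_mul]
      have h1 : ‖(t:ℂ)‖ ≤ 1 := by
        rw [Complex.norm_real, Real.norm_eq_abs, _root_.abs_of_nonneg ht.1]; exact ht.2
      have h2 : ‖z - c‖ < R := by rw [← dist_eq_norm]; exact mem_ball.1 hz
      calc ‖(t:ℂ)‖ * ‖z - c‖ ≤ 1 * ‖z - c‖ :=
            mul_le_mul_of_nonneg_right h1 (norm_nonneg _)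
        _ = ‖z - c‖ := one_mul _
        _ < R := h2
    have hγcont : ContinuousOn (fun t : ℝ => c + (t:ℂ) * (z - c)) (Set.Icc 0 1) :=
      (continuous_const.add (Complex.continuous_ofReal.mul continuous_const)).continuousOn
    have hintcont : ContinuousOn (fun t : ℝ => hgrad u (c + (t:ℂ) * (z - c)) * (z - c))
        (Set.Icc 0 1) :=
      (hgcont.comp hγcont (fun t ht => hγmem t ht)).mul continuousOn_const
    have huIcc : Set.uIcc (0:ℝ) 1 = Set.Icc 0 1 := Set.uIcc_of_le zero_le_one
    have hInt : IntervalIntegrable (fun t : ℝ => hgrad u (c + (t:ℂ) * (z - c)) * (z - c))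
        MeasureTheory.volume 0 1 := (hintcont.mono (by rw [huIcc])).intervalIntegrable
    -- FTC for ρ(t) = u(γ t)
    have hρ : ∀ t ∈ Set.uIcc (0:ℝ) 1,
        HasDerivAt (fun t : ℝ => u (c + (t:ℂ) * (z - c)))
          ((hgrad u (c + (t:ℂ) * (z - c)) * (z - c)).re) t := by
      intro t ht
      rw [huIcc] at ht
      have hmem := hγmem t ht
      have hγ' : HasDerivAt (fun t : ℝ => c + (t:ℂ) * (z - c)) (z - c) t := by
        have hQ : HasDerivAt (fun w : ℂ => c + w * (z - c)) (z - c) (t:ℂ) := by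
          simpa using ((hasDerivAt_id ((t:ℂ))).mul_const (z - c)).const_add c
        exact hQ.comp_ofReal
      have hud : HasFDerivAt u (fderiv ℝ u (c + (t:ℂ) * (z - c))) (c + (t:ℂ) * (z - c)) :=
        (((hu.1.differentiableOn (by norm_num)) _ hmem).differentiableAt
          (hopen.mem_nhds hmem)).hasFDerivAt
      have := hud.comp_hasDerivAt t hγ'
      rw [clm_apply_eq_re_mul (fderiv ℝ u (c + (t:ℂ) * (z - c))) (z - c)] at this
      exact this
    have hρcont : ContinuousOn (fun t : ℝ => (hgrad u (c + (t:ℂ) * (z - c)) * (z - c)).re)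
        (Set.Icc 0 1) := Complex.continuous_re.comp_continuousOn hintcont
    have hρInt : IntervalIntegrable (fun t : ℝ => (hgrad u (c + (t:ℂ) * (z - c)) * (z - c)).re)
        MeasureTheory.volume 0 1 := (hρcont.mono (by rw [huIcc])).intervalIntegrable
    have hFTC := intervalIntegral.integral_eq_sub_of_hasDerivAt hρ hρInt
    -- Re of the integral
    have hre : (∫ t in (0:ℝ)..1, hgrad u (c + (t:ℂ) * (z - c)) * (z - c)).re
        = ∫ t in (0:ℝ)..1, (hgrad u (c + (t:ℂ) * (z - c)) * (z - c)).re := by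
      have := Complex.reCLM.intervalIntegral_comp_comm hInt
      simpa using this.symm
    simp only [Complex.add_re, Complex.ofReal_re, hre, hFTC]
    simp

lemma harm_bounds {u : ℂ → ℝ} {F : ℂ → ℂ} {r M : ℝ} (hr : 0 < r)
    (hF : ∀ z ∈ ball (0:ℂ) r, HasDerivAt F (hgrad u z) z)
    (hRe : ∀ z ∈ ball (0:ℂ) r, (F z).re = u z)
    (hlt : ∀ z ∈ ball (0:ℂ) r, u z < M) :
    ‖hgrad u 0‖ ≤ 2 * Real.exp (M - u 0) / r ∧
    ∀ z ∈ ball (0:ℂ) r,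
      Real.exp (u 0) - 2 * Real.exp M / r * ‖z‖ ≤ Real.exp (u z) ∧
      Real.exp (u z) ≤ Real.exp (u 0) + 2 * Real.exp M / r * ‖z‖ := by
  have h0 : (0:ℂ) ∈ ball (0:ℂ) r := mem_ball_self hr
  have hFd : DifferentiableOn ℂ F (ball 0 r) := fun z hz =>
    (hF z hz).differentiableAt.differentiableWithinAt
  set g : ℂ → ℂ := fun z => Complex.exp (F z) with hg
  have hgd : DifferentiableOn ℂ g (ball 0 r) := hFd.cexp
  have habs : ∀ z ∈ ball (0:ℂ) r, ‖g z‖ = Real.exp (u z) := by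
    intro z hz; rw [hg]; simp [Complex.norm_exp, hRe z hz]
  have hmaps : MapsTo g (ball 0 r) (ball (g 0) (2 * Real.exp M)) := by
    intro z hz
    rw [mem_ball, dist_eq_norm]
    calc ‖g z - g 0‖ ≤ ‖g z‖ + ‖g 0‖ := norm_sub_le _ _
      _ = Real.exp (u z) + Real.exp (u 0) := by
          rw [habs z hz, habs 0 h0]
      _ < Real.exp M + Real.exp M :=
          add_lt_add (Real.exp_lt_exp.2 (hlt z hz)) (Real.exp_lt_exp.2 (hlt 0 h0))
      _ = 2 * Real.exp M := by ring
  constructor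
  · have hbound := Complex.norm_deriv_le_div_of_mapsTo_ball hgd (hmaps.mono_right ball_subset_closedBall) hr
    have hgderiv : deriv g 0 = Complex.exp (F 0) * hgrad u 0 := ((hF 0 h0).cexp).deriv
    rw [hgderiv, norm_mul, Complex.norm_exp, hRe 0 h0] at hbound
    have hexp : (0:ℝ) < Real.exp (u 0) := Real.exp_pos _
    calc ‖hgrad u 0‖
        = (Real.exp (u 0) * ‖hgrad u 0‖) / Real.exp (u 0) := by field_simp
      _ ≤ (2 * Real.exp M / r) / Real.exp (u 0) := by gcongr
      _ = 2 * Real.exp (M - u 0) / r := by rw [Real.exp_sub]; field_simp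
  · intro z hz
    have hdist := Complex.dist_le_div_mul_dist_of_mapsTo_ball hgd (hmaps.mono_right ball_subset_closedBall) hz
    rw [dist_eq_norm, dist_eq_norm, sub_zero] at hdist
    have h1 : ‖g z‖ - ‖g 0‖ ≤ ‖g z - g 0‖ := by
      simpa using norm_sub_norm_le (g z) (g 0)
    have h2 : ‖g 0‖ - ‖g z‖ ≤ ‖g z - g 0‖ := by
      have := norm_sub_norm_le (g 0) (g z)
      rw [norm_sub_rev] at this
      simpa using this
    rw [habs z hz, habs 0 h0] at h1 h2
    constructor
    · linarith [hdist]
    · linarith [hdist]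

lemma HarmonicOn.mono {u : ℂ → ℝ} {s s' : Set ℂ} (h : HarmonicOn u s) (hs : s' ⊆ s) :
    HarmonicOn u s' := ⟨h.1.mono hs, fun z hz => h.2 z (hs hz)⟩

lemma hgrad_neg (u : ℂ → ℝ) (z : ℂ) : hgrad (fun w => -u w) z = -hgrad u z := by
  simp only [hgrad, fderiv_fun_neg, ContinuousLinearMap.neg_apply]
  push_cast
  ring

lemma xlog_lower₁ {t x : ℝ} (ht : 0 < t) (hx : 0 < x) : -(1/t) ≤ x * Real.log (t * x) := by
  have h2 := Real.log_le_sub_one_of_pos (show (0:ℝ) < (t*x)⁻¹ by positivity)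
  rw [Real.log_inv] at h2
  have h1 : 1 - (t*x)⁻¹ ≤ Real.log (t*x) := by linarith
  have h3 : x * (1 - (t*x)⁻¹) ≤ x * Real.log (t*x) :=
    mul_le_mul_of_nonneg_left h1 hx.le
  have h4 : x * (1 - (t*x)⁻¹) = x - 1/t := by field_simp
  nlinarith
lemma xlog_upper {s y M : ℝ} (hs : 0 < s) (hy : 0 < y) (hyM : y ≤ M) :
    y * Real.log (s * y) ≤ s * M^2 := by
  have h1 : Real.log (s*y) ≤ s*y - 1 := Real.log_le_sub_one_of_pos (by positivity)
  calc y * Real.log (s*y) ≤ y * (s*y - 1) := mul_le_mul_of_nonneg_left h1 hy.le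
    _ = s*y^2 - y := by ring
    _ ≤ s*M^2 := by
        have hyM2 : y^2 ≤ M^2 := by nlinarith
        nlinarith

set_option maxHeartbeats 2000000 in
lemma key_bound (s t : ℝ) (hs : 0 < s) (ht : 0 < t) (a : ℝ × ℝ) (c ε : ℝ)
    (hεpos : 0 < ε) (hε1 : ε ≤ 1) :
    ∃ C : ℝ, ∀ f : ℂ → ℝ × ℝ,
      HarmonicMapOn f (ball 0 1) → MapsTo f (ball 0 1) (setB s t) →
      |(f 0).1 - a.1| ≤ 1 → |(f 0).2 - a.2| ≤ 1 →
      (∀ z ∈ ball (0:ℂ) ε, (f z).1 ≠ c) → ‖fderiv ℝ f 0‖ ≤ C := by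
  set α : ℝ := |a.1| + |c| + 1 with hα
  set M₀ : ℝ := |a.1| + |c| + 2 with hM₀
  set r₂ : ℝ := ε * Real.exp (-α) / 4 with hr₂
  set m : ℝ := -(1/t + s * M₀^2 + 1) with hm
  set C₁ : ℝ := 2 * Real.exp α / ε with hC₁
  set C₂ : ℝ := 2 * Real.exp (|a.2| + 1 - m) / r₂ with hC₂def
  have hαpos : 0 < α := by positivity
  have hr₂pos : 0 < r₂ := by positivity
  have hexpneg : Real.exp (-α) ≤ 1 := Real.exp_le_one_iff.2 (by linarith)
  have hr₂ε : r₂ ≤ ε := by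
    rw [hr₂]
    nlinarith [hεpos.le]
  have hC₁pos : 0 < C₁ := by positivity
  have hC₂pos : 0 < C₂ := by positivity
  refine ⟨C₁ + C₂, ?_⟩
  intro f hharm hmaps hu0 hv0 hno
  set u : ℂ → ℝ := fun z => (f z).1 with hu
  set v : ℂ → ℝ := fun z => (f z).2 with hv
  have hεsub : ball (0:ℂ) ε ⊆ ball 0 1 := ball_subset_ball hε1
  have hr₂sub : ball (0:ℂ) r₂ ⊆ ball 0 ε := ball_subset_ball hr₂ε
  have huh : HarmonicOn u (ball 0 ε) := hharm.1.mono hεsub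
  have hvh : HarmonicOn v (ball 0 r₂) := hharm.2.mono (hr₂sub.trans hεsub)
  have h0ε : (0:ℂ) ∈ ball (0:ℂ) ε := mem_ball_self hεpos
  -- bounds on u 0, v 0
  obtain ⟨hu0l, hu0r⟩ := abs_le.1 hu0
  obtain ⟨hv0l, hv0r⟩ := abs_le.1 hv0
  have hu0l' : -1 ≤ u 0 - a.1 := hu0l
  have hu0r' : u 0 - a.1 ≤ 1 := hu0r
  have hv0l' : -1 ≤ v 0 - a.2 := hv0l
  have hv0r' : v 0 - a.2 ≤ 1 := hv0r
  have ha1 := le_abs_self a.1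
  have ha1' := neg_abs_le a.1
  have hc1 := le_abs_self c
  have hc1' := neg_abs_le c
  have ha2 := le_abs_self a.2
  have ha2' := neg_abs_le a.2
  -- sign dichotomy
  have hcont : ContinuousOn u (ball 0 ε) := huh.1.continuousOn
  have hsign : (∀ z ∈ ball (0:ℂ) ε, u z < c) ∨ (∀ z ∈ ball (0:ℂ) ε, c < u z) := by
    by_contra hcontra
    push_neg at hcontra
    obtain ⟨⟨z₁, hz₁, hz₁'⟩, ⟨z₂, hz₂, hz₂'⟩⟩ := hcontra
    have hIcc : c ∈ Set.Icc (u z₂) (u z₁) := ⟨hz₂', hz₁'⟩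
    have := (convex_ball (0:ℂ) ε).isPreconnected.intermediate_value hz₂ hz₁ hcont hIcc
    obtain ⟨z, hz, hzc⟩ := this
    exact hno z hz hzc
  have hlog2 : Real.log 2 ≤ 1 := by
    have := Real.log_le_sub_one_of_pos (show (0:ℝ) < 2 by norm_num)
    linarith
  -- main case analysis for u
  have main : ‖hgrad u 0‖ ≤ C₁ ∧
      ∀ z ∈ ball (0:ℂ) r₂, -M₀ ≤ u z ∧ u z ≤ M₀ := by
    obtain ⟨F, hF, hRe⟩ := exists_completion hεpos huh
    rcases hsign with hA | hB
    · have hb := harm_bounds hεpos hF hRe hA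
      constructor
      · calc ‖hgrad u 0‖ ≤ 2 * Real.exp (c - u 0) / ε := hb.1
          _ ≤ C₁ := by
            rw [hC₁]
            gcongr 2 * ?_ / ε
            exact Real.exp_le_exp.2 (by linarith)
      · intro z hz
        have hzε := hr₂sub hz
        have hlow := (hb.2 z hzε).1
        have habsz : ‖z‖ < r₂ := by
          simpa [Complex.dist_eq] using mem_ball.1 hz
        have hkey : 2 * Real.exp c / ε * ‖z‖ ≤ Real.exp (u 0) / 2 := by
          have h5 : 2 * Real.exp c / ε * ‖z‖ ≤ 2 * Real.exp c / ε * r₂ := by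
            gcongr
          have h6 : 2 * Real.exp c / ε * r₂ = Real.exp c * Real.exp (-α) / 2 := by
            rw [hr₂]; field_simp; ring
          have h7 : Real.exp c * Real.exp (-α) = Real.exp (c - α) := by
            rw [← Real.exp_add]; ring_nf
          have h8 : Real.exp (c - α) ≤ Real.exp (u 0) := by
            apply Real.exp_le_exp.2
            rw [hα]
            linarith
          calc 2 * Real.exp c / ε * ‖z‖ ≤ 2 * Real.exp c / ε * r₂ := h5
            _ = Real.exp (c - α) / 2 := by rw [h6, h7]
            _ ≤ Real.exp (u 0) / 2 := by linarith
        have hexplow : Real.exp (u 0) / 2 ≤ Real.exp (u z) := by linarith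
        constructor
        · have h9 : Real.log (Real.exp (u 0) / 2) ≤ Real.log (Real.exp (u z)) :=
            Real.log_le_log (by positivity) hexplow
          rw [Real.log_exp, Real.log_div (Real.exp_ne_zero _) (by norm_num),
            Real.log_exp] at h9
          rw [hM₀]
          linarith
        · have := hA z hzε
          rw [hM₀]
          linarith
    · -- u > c : apply to -u
      have hF' : ∀ z ∈ ball (0:ℂ) ε, HasDerivAt (fun w => -F w) (hgrad (fun w => -u w) z) z := by
        intro z hz
        rw [hgrad_neg]
        exact (hF z hz).neg
      have hRe' : ∀ z ∈ ball (0:ℂ) ε, ((fun w => -F w) z).re = (fun w => -u w) z := by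
        intro z hz
        simp [hRe z hz]
      have hlt' : ∀ z ∈ ball (0:ℂ) ε, (fun w => -u w) z < -c := by
        intro z hz
        simpa using neg_lt_neg (hB z hz)
      have hb := harm_bounds hεpos hF' hRe' hlt'
      have hb1 := hb.1
      rw [hgrad_neg, norm_neg] at hb1
      constructor
      · calc ‖hgrad u 0‖ ≤ 2 * Real.exp (-c - -u 0) / ε := hb1
          _ ≤ C₁ := by
            rw [hC₁]
            gcongr 2 * ?_ / ε
            exact Real.exp_le_exp.2 (by linarith)
      · intro z hz
        have hzε := hr₂sub hz
        have hlow := (hb.2 z hzε).1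
        have habsz : ‖z‖ < r₂ := by
          simpa [Complex.dist_eq] using mem_ball.1 hz
        have hkey : 2 * Real.exp (-c) / ε * ‖z‖ ≤ Real.exp (-u 0) / 2 := by
          have h5 : 2 * Real.exp (-c) / ε * ‖z‖ ≤ 2 * Real.exp (-c) / ε * r₂ := by
            gcongr
          have h6 : 2 * Real.exp (-c) / ε * r₂ = Real.exp (-c) * Real.exp (-α) / 2 := by
            rw [hr₂]; field_simp; ring
          have h7 : Real.exp (-c) * Real.exp (-α) = Real.exp (-c - α) := by
            rw [← Real.exp_add]; ring_nf
          have h8 : Real.exp (-c - α) ≤ Real.exp (-u 0) := by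
            apply Real.exp_le_exp.2
            rw [hα]
            linarith
          calc 2 * Real.exp (-c) / ε * ‖z‖ ≤ 2 * Real.exp (-c) / ε * r₂ := h5
            _ = Real.exp (-c - α) / 2 := by rw [h6, h7]
            _ ≤ Real.exp (-u 0) / 2 := by linarith
        have hexplow : Real.exp (-u 0) / 2 ≤ Real.exp (-u z) := by linarith
        constructor
        · have := hB z hzε
          rw [hM₀]
          linarith
        · have h9 : Real.log (Real.exp (-u 0) / 2) ≤ Real.log (Real.exp (-u z)) :=
            Real.log_le_log (by positivity) hexplow
          rw [Real.log_exp, Real.log_div (Real.exp_ne_zero _) (by norm_num),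
            Real.log_exp] at h9
          rw [hM₀]
          linarith
  obtain ⟨Habs, Hbnd⟩ := main
  -- lower bound for v on ball r₂
  have hvlow : ∀ z ∈ ball (0:ℂ) r₂, m < v z := by
    intro z hz
    show m < (f z).2
    have hz1 : z ∈ ball (0:ℂ) 1 := hεsub (hr₂sub hz)
    obtain ⟨hp, h0, hn⟩ := hmaps hz1
    have hul : -M₀ ≤ (f z).1 := (Hbnd z hz).1
    have hur : (f z).1 ≤ M₀ := (Hbnd z hz).2
    have hMpos : (0:ℝ) < M₀ := by rw [hM₀]; positivity
    have htpos : 0 < 1/t := by positivity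
    have hspos : 0 ≤ s*M₀^2 := by positivity
    rcases lt_trichotomy ((f z).1) 0 with hneg | hzero | hpos
    · have h1 := hn hneg
      have h2 : -((f z).1) ≤ M₀ := by linarith
      have h3 : (0:ℝ) < -((f z).1) := by linarith
      have h4 := xlog_upper hs h3 h2
      have h6 : -(s*M₀^2) ≤ (f z).1 * Real.log (s * -(f z).1) := by nlinarith
      rw [hm]
      linarith
    · have := h0 hzero
      rw [hm]
      linarith
    · have h1 := hp hpos
      have h4 := xlog_lower₁ ht hpos
      rw [hm]
      linarith
  -- bound the gradient of v
  have Hvabs : ‖hgrad v 0‖ ≤ C₂ := by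
    obtain ⟨V, hV, hReV⟩ := exists_completion hr₂pos hvh
    have hV' : ∀ z ∈ ball (0:ℂ) r₂, HasDerivAt (fun w => -V w) (hgrad (fun w => -v w) z) z := by
      intro z hz
      rw [hgrad_neg]
      exact (hV z hz).neg
    have hReV' : ∀ z ∈ ball (0:ℂ) r₂, ((fun w => -V w) z).re = (fun w => -v w) z := by
      intro z hz
      simp [hReV z hz]
    have hlt' : ∀ z ∈ ball (0:ℂ) r₂, (fun w => -v w) z < -m := by
      intro z hz
      simpa using neg_lt_neg (hvlow z hz)
    have hb := (harm_bounds hr₂pos hV' hReV' hlt').1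
    rw [hgrad_neg, norm_neg] at hb
    calc ‖hgrad v 0‖ ≤ 2 * Real.exp (-m - -v 0) / r₂ := hb
      _ ≤ C₂ := by
        rw [hC₂def]
        gcongr 2 * ?_ / r₂
        exact Real.exp_le_exp.2 (by linarith)
  -- assemble the fderiv bound
  have h01 : (0:ℂ) ∈ ball (0:ℂ) 1 := mem_ball_self one_pos
  have hopen : IsOpen (ball (0:ℂ) 1) := isOpen_ball
  have hud : DifferentiableAt ℝ u 0 :=
    ((hharm.1.1.differentiableOn (by norm_num)) 0 h01).differentiableAt (hopen.mem_nhds h01)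
  have hvd : DifferentiableAt ℝ v 0 :=
    ((hharm.2.1.differentiableOn (by norm_num)) 0 h01).differentiableAt (hopen.mem_nhds h01)
  have hfeq : (fun z => (u z, v z)) = f := funext fun z => Prod.mk.eta
  have hfd : HasFDerivAt f ((fderiv ℝ u 0).prod (fderiv ℝ v 0)) 0 := by
    rw [← hfeq]
    exact (hud.hasFDerivAt).prodMk (hvd.hasFDerivAt)
  rw [hfd.fderiv]
  apply ContinuousLinearMap.opNorm_le_bound _ (by positivity)
  intro w
  rw [ContinuousLinearMap.prod_apply]
  have hLu : ‖fderiv ℝ u 0 w‖ ≤ C₁ * ‖w‖ := by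
    calc ‖fderiv ℝ u 0 w‖ ≤ ‖fderiv ℝ u 0‖ * ‖w‖ := (fderiv ℝ u 0).le_opNorm w
      _ ≤ C₁ * ‖w‖ := by
        apply mul_le_mul_of_nonneg_right _ (norm_nonneg w)
        exact le_trans (norm_fderiv_le_abs_hgrad u 0) Habs
  have hLv : ‖fderiv ℝ v 0 w‖ ≤ C₂ * ‖w‖ := by
    calc ‖fderiv ℝ v 0 w‖ ≤ ‖fderiv ℝ v 0‖ * ‖w‖ := (fderiv ℝ v 0).le_opNorm w
      _ ≤ C₂ * ‖w‖ := by
        apply mul_le_mul_of_nonneg_right _ (norm_nonneg w)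
        exact le_trans (norm_fderiv_le_abs_hgrad v 0) Hvabs
  rw [Prod.norm_def]
  apply max_le
  · calc ‖fderiv ℝ u 0 w‖ ≤ C₁ * ‖w‖ := hLu
      _ ≤ (C₁ + C₂) * ‖w‖ := by
        apply mul_le_mul_of_nonneg_right _ (norm_nonneg w)
        linarith
  · calc ‖fderiv ℝ v 0 w‖ ≤ C₂ * ‖w‖ := hLv
      _ ≤ (C₁ + C₂) * ‖w‖ := by
        apply mul_le_mul_of_nonneg_right _ (norm_nonneg w)
        linarith

/-- Level-set properties (Proposition 2.1 of the paper) for a degenerating sequence of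
harmonic maps into `B_{s,t}`: (i) every value `c` is attained by the first component
`u_k` for all large `k`; (ii) the level set `{u_k = c}` approaches the origin. -/
theorem levelSets_B (s t : ℝ) (hs : 0 < s) (ht : 0 < t)
    (a : ℝ × ℝ) (ha : a ∈ setB s t) (f : ℕ → ℂ → ℝ × ℝ)
    (hharm : ∀ k, HarmonicMapOn (f k) (ball (0 : ℂ) 1))
    (hmaps : ∀ k, MapsTo (f k) (ball (0 : ℂ) 1) (setB s t))
    (hconv : Tendsto (fun k => f k 0) atTop (𝓝 a))
    (hblow : Tendsto (fun k => ‖fderiv ℝ (f k) 0‖) atTop atTop) :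
    ∀ c : ℝ,
      (∃ K : ℕ, ∀ k ≥ K, ∃ z ∈ ball (0 : ℂ) 1, (f k z).1 = c) ∧
      (∀ ε > (0 : ℝ), ∃ K : ℕ, ∀ k ≥ K,
        ∃ z ∈ ball (0 : ℂ) 1, ‖z‖ < ε ∧ (f k z).1 = c) := by
  intro c
  have part2 : ∀ ε > (0:ℝ), ∃ K : ℕ, ∀ k ≥ K,
      ∃ z ∈ ball (0:ℂ) 1, ‖z‖ < ε ∧ (f k z).1 = c := by
    intro ε hε
    set ε' : ℝ := min ε 1 with hε'def
    have hε'pos : 0 < ε' := lt_min hε one_pos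
    have hε'1 : ε' ≤ 1 := min_le_right _ _
    have hε'ε : ε' ≤ ε := min_le_left _ _
    obtain ⟨C, hC⟩ := key_bound s t hs ht a c ε' hε'pos hε'1
    have h1 : ∀ᶠ k in atTop, f k 0 ∈ ball a 1 := hconv (Metric.ball_mem_nhds a one_pos)
    have h2 : ∀ᶠ k in atTop, C < ‖fderiv ℝ (f k) 0‖ := hblow.eventually_gt_atTop C
    obtain ⟨K, hK⟩ := Filter.eventually_atTop.1 (h1.and h2)
    refine ⟨K, fun k hk => ?_⟩
    obtain ⟨hdist, hgt⟩ := hK k hk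
    by_contra hcon
    push_neg at hcon
    have hno : ∀ z ∈ ball (0:ℂ) ε', (f k z).1 ≠ c := by
      intro z hz
      apply hcon z (ball_subset_ball hε'1 hz)
      calc ‖z‖ < ε' := by simpa [Complex.dist_eq] using mem_ball.1 hz
        _ ≤ ε := hε'ε
    have hdist' : dist (f k 0) a < 1 := mem_ball.1 hdist
    rw [Prod.dist_eq] at hdist'
    have hu0 : |(f k 0).1 - a.1| ≤ 1 := by
      have h3 : dist (f k 0).1 a.1 ≤ 1 := le_trans (le_max_left _ _) hdist'.le
      rwa [Real.dist_eq] at h3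
    have hv0 : |(f k 0).2 - a.2| ≤ 1 := by
      have h3 : dist (f k 0).2 a.2 ≤ 1 := le_trans (le_max_right _ _) hdist'.le
      rwa [Real.dist_eq] at h3
    exact absurd (hC (f k) (hharm k) (hmaps k) hu0 hv0 hno) (not_le.2 hgt)
  refine ⟨?_, part2⟩
  obtain ⟨K, hK⟩ := part2 1 one_pos
  refine ⟨K, fun k hk => ?_⟩
  obtain ⟨z, hz, _, hzc⟩ := hK k hk
  exact ⟨z, hz, hzc⟩
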